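/- Let (x*,y*) be an extreme point of 𝒫 (a convex subset of the feasible region of the continuous HPR relaxation) and suppose ŷ ∈ F(x*) with q(ŷ) < q(y*). Then (x*,y*) ∉ 𝒟(ŷ,𝒫) := conv( {(x,y) ∈ 𝒫 : q(y) ≤ q(ŷ)} ∪ ⋃_{i=1}^{m₂} {(x,y) ∈ 𝒫 : Aⁱx ≤ fᵢ − Bⁱŷ − 1} ), so there exists a linear inequality α'x + β'y ≥ τ valid for 𝒟(ŷ,𝒫) and violated by (x*,y*). -/

import Mathlib

open Matrix

/-- Convex hull of a compact set in a finite-dimensional normed space is compact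
(via Carathéodory's theorem). -/
lemma myIsCompactConvexHull {E : Type*} [NormedAddCommGroup E] [NormedSpace ℝ E]
    [FiniteDimensional ℝ E] {s : Set E} (hs : IsCompact s) :
    IsCompact (convexHull ℝ s) := by
  classical
  rcases s.eq_empty_or_nonempty with rfl | ⟨x₀, hx₀⟩
  · simp
  set N := Module.finrank ℝ E + 1 with hN
  set K : Set ((Fin N → ℝ) × (Fin N → E)) :=
    (stdSimplex ℝ (Fin N)) ×ˢ (Set.univ.pi fun _ => s) with hK
  have hKcomp : IsCompact K :=
    (isCompact_stdSimplex (𝕜 := ℝ) (ι := Fin N)).prod (isCompact_univ_pi fun _ => hs)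
  have hFcont : Continuous fun p : (Fin N → ℝ) × (Fin N → E) => ∑ i, p.1 i • p.2 i := by
    apply continuous_finset_sum
    intro i _
    exact ((continuous_apply i).comp continuous_fst).smul
      ((continuous_apply i).comp continuous_snd)
  have himg : (fun p : (Fin N → ℝ) × (Fin N → E) => ∑ i, p.1 i • p.2 i) '' K
      = convexHull ℝ s := by
    apply Set.Subset.antisymm
    · rintro x ⟨⟨w, z⟩, ⟨⟨hw0, hw1⟩, hz⟩, rfl⟩
      exact (convex_convexHull ℝ s).sum_mem (fun i _ => hw0 i) hw1
        (fun i _ => subset_convexHull ℝ s (hz i (Set.mem_univ i)))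
    · intro x hx
      obtain ⟨ι, hfin, z, w, hzs, hai, hw0, hw1, hwz⟩ :=
        eq_pos_convex_span_of_mem_convexHull hx
      have hcard : Fintype.card ι ≤ N := by
        calc Fintype.card ι ≤ Module.finrank ℝ (vectorSpan ℝ (Set.range z)) + 1 :=
              hai.card_le_finrank_succ
          _ ≤ N := by
              have := Submodule.finrank_le (vectorSpan ℝ (Set.range z))
              omega
      obtain ⟨e⟩ : Nonempty (ι ↪ Fin N) := by
        rw [Function.Embedding.nonempty_iff_card_le, Fintype.card_fin]
        exact hcard
      set w' : Fin N → ℝ := fun j => if h : ∃ i, e i = j then w h.choose else 0 with hw'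
      set z' : Fin N → E := fun j => if h : ∃ i, e i = j then z h.choose else x₀ with hz'
      have hwe : ∀ i, w' (e i) = w i := by
        intro i
        have h : ∃ i', e i' = e i := ⟨i, rfl⟩
        simp only [hw', dif_pos h]
        congr 1
        exact e.injective h.choose_spec
      have hze : ∀ i, z' (e i) = z i := by
        intro i
        have h : ∃ i', e i' = e i := ⟨i, rfl⟩
        simp only [hz', dif_pos h]
        congr 1
        exact e.injective h.choose_spec
      have hmem : ∀ j : Fin N, j ∉ Finset.univ.map e → ¬∃ i, e i = j := by
        intro j hj h
        exact hj (Finset.mem_map.2 ⟨h.choose, Finset.mem_univ _, h.choose_spec⟩)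
      refine ⟨(w', z'), ⟨⟨?_, ?_⟩, ?_⟩, ?_⟩
      · intro j
        simp only [hw']
        split
        · exact (hw0 _).le
        · exact le_rfl
      · calc ∑ j, w' j = ∑ j ∈ Finset.univ.map e, w' j :=
              (Finset.sum_subset (Finset.subset_univ _) (fun j _ hj => by
                simp only [hw']; rw [dif_neg (hmem j hj)])).symm
          _ = ∑ i, w' (e i) := Finset.sum_map _ _ _
          _ = ∑ i, w i := Finset.sum_congr rfl fun i _ => hwe i
          _ = 1 := hw1
      · intro j _
        simp only [hz']
        split
        · exact hzs ⟨_, rfl⟩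
        · exact hx₀
      · show ∑ j, w' j • z' j = x
        calc ∑ j, w' j • z' j = ∑ j ∈ Finset.univ.map e, w' j • z' j :=
              (Finset.sum_subset (Finset.subset_univ _) (fun j _ hj => by
                simp only [hw']; rw [dif_neg (hmem j hj), zero_smul])).symm
          _ = ∑ i, w' (e i) • z' (e i) := Finset.sum_map _ _ _
          _ = ∑ i, w i • z i := Finset.sum_congr rfl fun i _ => by rw [hwe, hze]
          _ = x := hwz
  rw [← himg]
  exact hKcomp.image hFcont

/-- an extreme point (x*,y*) of 𝒫 with yh ∈ F(x*) and q(yh) < q(y*)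
is not in 𝒟(yh,𝒫), so a disjunctive cut α'x + β'y ≥ τ violated by (x*,y*) exists. -/
theorem stmt6 {n1 n2 m2 : ℕ}
    (A : Matrix (Fin m2) (Fin n1) ℝ) (B : Matrix (Fin m2) (Fin n2) ℝ)
    (f : Fin m2 → ℝ) (Y : Set (Fin n2 → ℝ)) (q : (Fin n2 → ℝ) → ℝ)
    (hqcont : Continuous q)
    (P : Set ((Fin n1 → ℝ) × (Fin n2 → ℝ))) (hPconv : Convex ℝ P)
    (hPcomp : IsCompact P)
    (xs : Fin n1 → ℝ) (ys : Fin n2 → ℝ)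
    (hext : (xs, ys) ∈ Set.extremePoints ℝ P)
    (yh : Fin n2 → ℝ) (hyhint : ∀ j, ∃ k : ℤ, yh j = (k : ℝ)) (hyhY : yh ∈ Y)
    (hyhfeas : ∀ i, A.mulVec xs i + B.mulVec yh i ≥ f i)
    (hq : q yh < q ys) :
    (xs, ys) ∉ convexHull ℝ ({p ∈ P | q p.2 ≤ q yh} ∪
        ⋃ i, {p ∈ P | A.mulVec p.1 i ≤ f i - B.mulVec yh i - 1}) ∧
      ∃ (α : Fin n1 → ℝ) (β : Fin n2 → ℝ) (τ : ℝ),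
        (∀ p ∈ convexHull ℝ ({p ∈ P | q p.2 ≤ q yh} ∪
            ⋃ i, {p ∈ P | A.mulVec p.1 i ≤ f i - B.mulVec yh i - 1}),
          α ⬝ᵥ p.1 + β ⬝ᵥ p.2 ≥ τ) ∧
        α ⬝ᵥ xs + β ⬝ᵥ ys < τ := by
  classical
  set S : Set ((Fin n1 → ℝ) × (Fin n2 → ℝ)) :=
    ({p ∈ P | q p.2 ≤ q yh} ∪
      ⋃ i, {p ∈ P | A.mulVec p.1 i ≤ f i - B.mulVec yh i - 1}) with hS
  have hSsubP : S ⊆ P := by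
    rintro p (hp | hp)
    · exact hp.1
    · simp only [Set.mem_iUnion, Set.mem_setOf_eq] at hp
      obtain ⟨i, hi, -⟩ := hp
      exact hi
  have hhull_sub : convexHull ℝ S ⊆ P := convexHull_min hSsubP hPconv
  have hnotS : (xs, ys) ∉ S := by
    rintro (h | h)
    · exact absurd h.2 (not_le.2 hq)
    · simp only [Set.mem_iUnion, Set.mem_setOf_eq] at h
      obtain ⟨i, -, hi⟩ := h
      have := hyhfeas i
      linarith
  have hnot : (xs, ys) ∉ convexHull ℝ S := by
    intro hmem
    apply hnotS
    apply extremePoints_convexHull_subset (𝕜 := ℝ)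
    rw [mem_extremePoints] at hext ⊢
    exact ⟨hmem, fun x₁ h₁ x₂ h₂ hseg =>
      hext.2 x₁ (hhull_sub h₁) x₂ (hhull_sub h₂) hseg⟩
  refine ⟨hnot, ?_⟩
  have hScomp : IsCompact S := by
    apply IsCompact.union
    · exact hPcomp.inter_right (isClosed_le (hqcont.comp continuous_snd) continuous_const)
    · apply isCompact_iUnion
      intro i
      have hc : Continuous fun p : (Fin n1 → ℝ) × (Fin n2 → ℝ) => A.mulVec p.1 i := by
        have h1 : Continuous fun x : Fin n1 → ℝ => A.mulVec x :=
          A.mulVecLin.continuous_of_finiteDimensional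
        exact ((continuous_apply i).comp h1).comp continuous_fst
      exact hPcomp.inter_right (isClosed_le hc continuous_const)
  have hhullcomp : IsCompact (convexHull ℝ S) := myIsCompactConvexHull hScomp
  obtain ⟨g, u, hgu, hsep⟩ :=
    geometric_hahn_banach_point_closed (convex_convexHull ℝ S) hhullcomp.isClosed hnot
  have hsumx : ∀ x : Fin n1 → ℝ, x = ∑ j, x j • (Pi.single j (1:ℝ) : Fin n1 → ℝ) := by
    intro x
    ext k
    simp [Pi.single_apply]
  have hsumy : ∀ y : Fin n2 → ℝ, y = ∑ j, y j • (Pi.single j (1:ℝ) : Fin n2 → ℝ) := by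
    intro y
    ext k
    simp [Pi.single_apply]
  have key : ∀ p : (Fin n1 → ℝ) × (Fin n2 → ℝ),
      g p = (fun j => g (Pi.single j 1, 0)) ⬝ᵥ p.1 + (fun j => g (0, Pi.single j 1)) ⬝ᵥ p.2 := by
    intro p
    have h1 : p = (p.1, (0 : Fin n2 → ℝ)) + ((0 : Fin n1 → ℝ), p.2) := by
      ext <;> simp
    have hx : (p.1, (0 : Fin n2 → ℝ))
        = ∑ j, p.1 j • ((Pi.single j (1:ℝ) : Fin n1 → ℝ), (0 : Fin n2 → ℝ)) := by
      refine Prod.ext ?_ ?_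
      · rw [Prod.fst_sum]
        simpa using hsumx p.1
      · rw [Prod.snd_sum]
        simp
    have hy : ((0 : Fin n1 → ℝ), p.2)
        = ∑ j, p.2 j • ((0 : Fin n1 → ℝ), (Pi.single j (1:ℝ) : Fin n2 → ℝ)) := by
      refine Prod.ext ?_ ?_
      · rw [Prod.fst_sum]
        simp
      · rw [Prod.snd_sum]
        simpa using hsumy p.2
    calc g p = g ((p.1, (0 : Fin n2 → ℝ)) + ((0 : Fin n1 → ℝ), p.2)) := by rw [← h1]
      _ = g (p.1, (0 : Fin n2 → ℝ)) + g ((0 : Fin n1 → ℝ), p.2) := map_add _ _ _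
      _ = _ := by
          rw [hx, hy, map_sum, map_sum]
          simp only [_root_.map_smul, smul_eq_mul]
          rw [dotProduct, dotProduct]
          congr 1 <;> exact Finset.sum_congr rfl fun j _ => mul_comm _ _
  refine ⟨fun j => g (Pi.single j 1, 0), fun j => g (0, Pi.single j 1), u, ?_, ?_⟩
  · intro p hp
    have := hsep p hp
    rw [key p] at this
    exact le_of_lt this
  · have hk := key (xs, ys)
    simp only at hk
    rw [← hk]
    exact hgu
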